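/- Let b be a holomorphic map of the open unit disk 𝔻 ⊂ ℂ into itself, let f : 𝔻 → ℂ be such that the kernel (z,w) ↦ (1 − b(z)·conj(b(w)))/(1 − z·conj(w)) − f(z)·conj(f(w)) is positive semidefinite on 𝔻, and suppose the function g = 1/f (i.e. f(z)·g(z) = 1 for all z ∈ 𝔻) is analytic on 𝔻 with |g(z)| ≤ M for all z ∈ 𝔻. Then the kernel (z,w) ↦ M²/(1 − z·conj(w)) − 1/(1 − b(z)·conj(b(w))) is positive semidefinite on 𝔻. (This is the kernel form of the estimate ‖C_b‖ ≤ ‖1/f‖_∞ · ‖f‖_{H(b)} for f ∈ H(b).) -/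

import Mathlib

open Complex Metric ComplexConjugate
open scoped ComplexOrder

noncomputable section

/-- A kernel `K : X → X → ℂ` is positive semidefinite on a set `S`: for all finite
families of points of `S` and scalars, the associated quadratic form is a
nonnegative real number (using the partial order on `ℂ`). -/
def IsPSDKernelOn {X : Type*} (K : X → X → ℂ) (S : Set X) : Prop :=
  ∀ (n : ℕ) (x : Fin n → X), (∀ i, x i ∈ S) → ∀ c : Fin n → ℂ,
    0 ≤ ∑ i, ∑ j, c i * conj (c j) * K (x i) (x j)

section Helpers
open Filter
open scoped Real Topology

lemma one_sub_mul_ne {u v : ℂ} (hu : ‖u‖ < 1) (hv : ‖v‖ ≤ 1) : 1 - u * v ≠ 0 := by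
  have h : ‖u * v‖ < 1 := by
    rw [norm_mul]
    nlinarith [norm_nonneg u, norm_nonneg v]
  intro h0
  have : u * v = 1 := by linear_combination -h0
  rw [this, norm_one] at h
  exact lt_irrefl _ h

lemma herm_im_zero {n : ℕ} (K : Fin n → Fin n → ℂ) (hK : ∀ i j, K j i = conj (K i j))
    (c : Fin n → ℂ) : (∑ i, ∑ j, c i * conj (c j) * K i j).im = 0 := by
  rw [← Complex.conj_eq_iff_im]
  rw [map_sum]
  rw [Finset.sum_comm]
  apply Finset.sum_congr rfl
  intro j _
  rw [map_sum]
  apply Finset.sum_congr rfl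
  intro i _
  simp only [map_mul, hK i j, Complex.conj_conj]
  ring

/-- Cauchy-type formula on circles. -/
lemma cauchy_formula (F : ℂ → ℂ) (hF : DifferentiableOn ℂ F (ball (0:ℂ) 1))
    {r : ℝ} (hr0 : 0 < r) (hr1 : r < 1) {ξ : ℂ} (hξ : ‖ξ‖ < 1) :
    ∫ θ in (0:ℝ)..(2*π), F (circleMap 0 r θ) * (1 - ξ * conj (circleMap 0 r θ))⁻¹
      = (2*π : ℝ) * F (ξ * (r:ℂ)^2) := by
  have hr2 : (0:ℝ) < r^2 := by positivity
  have hsub : closedBall (0:ℂ) r ⊆ ball 0 1 := by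
    intro z hz
    simp only [mem_closedBall, mem_ball, dist_zero_right] at hz ⊢
    linarith
  have hdc : DiffContOnCl ℂ F (ball (0:ℂ) r) :=
    ⟨hF.mono (ball_subset_ball hr1.le), (hF.continuousOn).mono (by
      rw [closure_ball (0:ℂ) (ne_of_gt hr0)]; exact hsub)⟩
  have hw : ξ * (r:ℂ)^2 ∈ ball (0:ℂ) r := by
    simp only [mem_ball, dist_zero_right, norm_mul, norm_pow, Complex.norm_real,
      Real.norm_eq_abs, abs_of_pos hr0]
    nlinarith [norm_nonneg ξ]
  have key := hdc.circleIntegral_sub_inv_smul hw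
  have hunf : (∮ (z : ℂ) in C(0, r), (z - ξ * (r:ℂ)^2)⁻¹ • F z)
      = ∫ θ in (0:ℝ)..(2*π), (circleMap 0 r θ * I) * ((circleMap 0 r θ - ξ * (r:ℂ)^2)⁻¹ * F (circleMap 0 r θ)) := by
    simp only [circleIntegral, deriv_circleMap, smul_eq_mul]
  rw [hunf] at key
  have hptwise : ∀ θ : ℝ, (circleMap 0 r θ * I) * ((circleMap 0 r θ - ξ * (r:ℂ)^2)⁻¹ * F (circleMap 0 r θ))
      = I * (F (circleMap 0 r θ) * (1 - ξ * conj (circleMap 0 r θ))⁻¹) := by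
    intro θ
    set z := circleMap 0 r θ with hz
    have hz0 : z ≠ 0 := circleMap_ne_center (ne_of_gt hr0)
    have hznorm : ‖z‖ = r := by
      rw [hz, norm_circleMap_zero, abs_of_pos hr0]
    have hzc : z * conj z = ((r:ℂ))^2 := by
      rw [Complex.mul_conj]
      norm_cast
      rw [Complex.normSq_eq_norm_sq, hznorm]
    have h1 : (1 - ξ * conj z) * z = z - ξ * (r:ℂ)^2 := by
      rw [← hzc]; ring
    have hne1 : 1 - ξ * conj z ≠ 0 := by
      apply one_sub_mul_ne hξ
      rw [RCLike.norm_conj, hznorm]; exact hr1.le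
    have hne2 : z - ξ * (r:ℂ)^2 ≠ 0 := by
      rw [← h1]
      exact mul_ne_zero hne1 hz0
    rw [← h1, mul_inv]
    field_simp
  rw [intervalIntegral.integral_congr (fun θ _ => hptwise θ)] at key
  rw [intervalIntegral.integral_const_mul] at key
  apply mul_left_cancel₀ I_ne_zero
  rw [key, smul_eq_mul]
  push_cast
  ring

lemma cs_aux {f g : ℝ → ℝ} (hf : Continuous f) (hg : Continuous g)
    (hf0 : ∀ x, 0 ≤ f x) (hg0 : ∀ x, 0 ≤ g x) {a b : ℝ} (hab : a ≤ b) :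
    ∫ θ in a..b, f θ * g θ ≤ Real.sqrt (∫ θ in a..b, f θ^2) * Real.sqrt (∫ θ in a..b, g θ^2) := by
  set F := ∫ θ in a..b, f θ^2 with hF
  set G := ∫ θ in a..b, g θ^2 with hG
  set P := ∫ θ in a..b, f θ * g θ with hP
  have hif : IntervalIntegrable (fun θ => f θ^2) MeasureTheory.volume a b :=
    (hf.pow 2).intervalIntegrable a b
  have hig : IntervalIntegrable (fun θ => g θ^2) MeasureTheory.volume a b :=
    (hg.pow 2).intervalIntegrable a b
  have hifg : IntervalIntegrable (fun θ => f θ * g θ) MeasureTheory.volume a b :=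
    (hf.mul hg).intervalIntegrable a b
  have hF0 : 0 ≤ F := intervalIntegral.integral_nonneg hab (fun x _ => sq_nonneg _)
  have hG0 : 0 ≤ G := intervalIntegral.integral_nonneg hab (fun x _ => sq_nonneg _)
  have hP0 : 0 ≤ P := intervalIntegral.integral_nonneg hab (fun x _ => mul_nonneg (hf0 x) (hg0 x))
  have key : ∀ t : ℝ, 0 ≤ t^2 * F - 2*t*P + G := by
    intro t
    have h1 : ∀ θ, (t * f θ - g θ)^2 = t^2 * f θ^2 - 2*t*(f θ * g θ) + g θ^2 := by
      intro θ; ring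
    have h2 : (0:ℝ) ≤ ∫ θ in a..b, (t * f θ - g θ)^2 :=
      intervalIntegral.integral_nonneg hab (fun x _ => sq_nonneg _)
    rw [intervalIntegral.integral_congr (fun θ _ => h1 θ)] at h2
    rwa [intervalIntegral.integral_add ((hif.const_mul _).sub (hifg.const_mul _)) hig,
      intervalIntegral.integral_sub (hif.const_mul _) (hifg.const_mul _),
      intervalIntegral.integral_const_mul, intervalIntegral.integral_const_mul] at h2
  have hPFG : P^2 ≤ F * G := by
    rcases eq_or_lt_of_le hF0 with h | h
    · have hP0' : P = 0 := by
        by_contra hne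
        have hPpos : 0 < P := lt_of_le_of_ne hP0 (Ne.symm hne)
        have ht : 2*((G+1)/(2*P))*P = G+1 := by field_simp
        have h5 := key ((G+1)/(2*P))
        rw [← h] at h5
        nlinarith
      rw [hP0']; nlinarith
    · have hexp : ((P/F)^2*F - 2*(P/F)*P + G)*F = P^2 - 2*P^2 + G*F := by
        field_simp
      nlinarith [mul_nonneg (key (P/F)) h.le]
  calc P = Real.sqrt (P^2) := by rw [Real.sqrt_sq hP0]
  _ ≤ Real.sqrt (F * G) := Real.sqrt_le_sqrt hPFG
  _ = Real.sqrt F * Real.sqrt G := Real.sqrt_mul hF0 _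

lemma stepA {n : ℕ} (X B F G c : Fin n → ℂ)
    (hX : ∀ i, ‖X i‖ < 1) (hB : ∀ i, ‖B i‖ < 1)
    (hFG : ∀ i, F i * G i = 1)
    (hpos : ∀ d : Fin n → ℂ, 0 ≤ ∑ i, ∑ j, d i * conj (d j) *
      ((1 - B i * conj (B j)) / (1 - X i * conj (X j)) - F i * conj (F j))) :
    ∑ i, ∑ j, c i * conj (c j) * (1 - B i * conj (B j))⁻¹ ≤
    ∑ i, ∑ j, (c i * G i) * conj (c j * G j) * (1 - X i * conj (X j))⁻¹ := by
  have hBB : ∀ i j, ‖B i * conj (B j)‖ < 1 := by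
    intro i j
    rw [norm_mul, RCLike.norm_conj]
    nlinarith [norm_nonneg (B i), norm_nonneg (B j), hB i, hB j]
  have hBne : ∀ i j, 1 - B i * conj (B j) ≠ 0 := fun i j =>
    one_sub_mul_ne (hB i) (by rw [RCLike.norm_conj]; exact (hB j).le)
  have hXne : ∀ i j, 1 - X i * conj (X j) ≠ 0 := fun i j =>
    one_sub_mul_ne (hX i) (by rw [RCLike.norm_conj]; exact (hX j).le)
  set u : ℕ → Fin n → Fin n → ℂ := fun m i j =>
    (c i * G i * (B i)^m) * conj (c j * G j * (B j)^m) *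
      ((1 - B i * conj (B j)) / (1 - X i * conj (X j)) - F i * conj (F j)) with hu
  have hsum : ∀ i j : Fin n, Summable (fun m : ℕ => u m i j) := by
    intro i j
    have h1 : (fun m : ℕ => u m i j)
        = fun m => (B i * conj (B j))^m * ((c i * G i) * conj (c j * G j) *
          ((1 - B i * conj (B j)) / (1 - X i * conj (X j)) - F i * conj (F j))) := by
      funext m
      simp only [hu, map_mul, map_pow]
      ring
    rw [h1]
    exact (summable_geometric_of_norm_lt_one (hBB i j)).mul_right _
  have htsum : ∀ i j : Fin n, (∑' m : ℕ, u m i j)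
      = (c i * G i) * conj (c j * G j) * (1 - X i * conj (X j))⁻¹
        - c i * conj (c j) * (1 - B i * conj (B j))⁻¹ := by
    intro i j
    have h1 : (fun m : ℕ => u m i j)
        = fun m => (B i * conj (B j))^m * ((c i * G i) * conj (c j * G j) *
          ((1 - B i * conj (B j)) / (1 - X i * conj (X j)) - F i * conj (F j))) := by
      funext m
      simp only [hu, map_mul, map_pow]
      ring
    rw [h1, tsum_mul_right, tsum_geometric_of_norm_lt_one (hBB i j)]
    have e1 : (1 - B i * conj (B j))⁻¹ * (1 - B i * conj (B j)) = 1 :=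
      inv_mul_cancel₀ (hBne i j)
    have hcFGj : conj (F j) * conj (G j) = 1 := by
      rw [← map_mul, hFG j, map_one]
    have e3 : (c i * G i) * conj (c j * G j) * (F i * conj (F j)) = c i * conj (c j) := by
      calc (c i * G i) * conj (c j * G j) * (F i * conj (F j))
          = (c i * conj (c j)) * ((F i * G i) * (conj (F j) * conj (G j))) := by
            simp only [map_mul]; ring
      _ = c i * conj (c j) := by rw [hFG i, hcFGj]; ring
    rw [div_eq_mul_inv]
    linear_combination ((1 - X i * conj (X j))⁻¹ * ((c i * G i) * conj (c j * G j))) * e1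
      - (1 - B i * conj (B j))⁻¹ * e3
  rw [← sub_nonneg]
  have hrw : (∑ i, ∑ j, (c i * G i) * conj (c j * G j) * (1 - X i * conj (X j))⁻¹)
      - (∑ i, ∑ j, c i * conj (c j) * (1 - B i * conj (B j))⁻¹)
      = ∑ i, ∑ j, ∑' m : ℕ, u m i j := by
    rw [← Finset.sum_sub_distrib]
    apply Finset.sum_congr rfl
    intro i _
    rw [← Finset.sum_sub_distrib]
    apply Finset.sum_congr rfl
    intro j _
    rw [htsum i j]
  rw [hrw]
  have hswap : (∑ i, ∑ j, ∑' m : ℕ, u m i j) = ∑' m : ℕ, ∑ i, ∑ j, u m i j := by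
    rw [Summable.tsum_finsetSum (fun i _ => summable_sum (fun j _ => hsum i j))]
    apply Finset.sum_congr rfl
    intro i _
    rw [Summable.tsum_finsetSum (fun j _ => hsum i j)]
  rw [hswap]
  exact tsum_nonneg (fun m => hpos (fun i => c i * G i * (B i)^m))

set_option maxHeartbeats 1000000 in
lemma stepB (g : ℂ → ℂ) (M : ℝ) (hg : DifferentiableOn ℂ g (ball (0:ℂ) 1))
    (hgb : ∀ z ∈ ball (0:ℂ) 1, ‖g z‖ ≤ M)
    {n : ℕ} (x : Fin n → ℂ) (hx : ∀ i, ‖x i‖ < 1) (c : Fin n → ℂ) :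
    (∑ i, ∑ j, (c i * g (x i)) * conj (c j * g (x j)) * (1 - x i * conj (x j))⁻¹).re
      ≤ M^2 * (∑ i, ∑ j, c i * conj (c j) * (1 - x i * conj (x j))⁻¹).re := by
  have hM : 0 ≤ M := le_trans (norm_nonneg (g 0)) (hgb 0 (by simp))
  have pi_pos := Real.pi_pos
  have h2π : (0:ℝ) ≤ 2*π := by linarith
  have hxball : ∀ i, x i ∈ ball (0:ℂ) 1 := by
    intro i; simpa [mem_ball, dist_zero_right] using hx i
  have hXne : ∀ (z : ℂ), ‖z‖ < 1 → ∀ j, 1 - z * conj (x j) ≠ 0 := fun z hz j =>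
    one_sub_mul_ne hz (by rw [RCLike.norm_conj]; exact (hx j).le)
  have hXne' : ∀ (z : ℂ), ‖z‖ ≤ 1 → ∀ k, 1 - x k * conj z ≠ 0 := fun z hz k =>
    one_sub_mul_ne (hx k) (by rw [RCLike.norm_conj]; exact hz)
  set e : Fin n → ℂ := fun j => c j * g (x j) with he
  set φf : ℂ → ℂ := fun z => ∑ j, conj (e j) * (1 - z * conj (x j))⁻¹ with hφf
  set ψf : ℂ → ℂ := fun z => ∑ j, conj (c j) * (1 - z * conj (x j))⁻¹ with hψf
  set Nφ : ℂ := ∑ i, ∑ j, e i * conj (e j) * (1 - x i * conj (x j))⁻¹ with hNφ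
  set Nψ : ℂ := ∑ i, ∑ j, c i * conj (c j) * (1 - x i * conj (x j))⁻¹ with hNψ
  -- differentiability
  have hdiff_inv : ∀ (j : Fin n),
      DifferentiableOn ℂ (fun z => (1 - z * conj (x j))⁻¹) (ball (0:ℂ) 1) := by
    intro j
    apply DifferentiableOn.inv
    · exact (((differentiable_id.mul_const _).const_sub 1)).differentiableOn
    · intro z hz
      exact hXne z (by simpa [mem_ball, dist_zero_right] using hz) j
  have hφdiff : DifferentiableOn ℂ φf (ball (0:ℂ) 1) := by
    rw [hφf]
    apply DifferentiableOn.fun_sum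
    intro j _
    exact (hdiff_inv j).const_mul _
  -- circle map facts
  have hcmnorm : ∀ {r : ℝ}, r ∈ Set.Ioo (0:ℝ) 1 → ∀ θ : ℝ, ‖circleMap 0 r θ‖ < 1 := by
    intro r hr θ
    rw [norm_circleMap_zero, abs_of_pos hr.1]
    exact hr.2
  have hcball : ∀ {r : ℝ}, r ∈ Set.Ioo (0:ℝ) 1 → ∀ θ : ℝ, circleMap 0 r θ ∈ ball (0:ℂ) 1 := by
    intro r hr θ; simpa [mem_ball, dist_zero_right] using hcmnorm hr θ
  have hcont_comb : ∀ (d : Fin n → ℂ) {r : ℝ}, r ∈ Set.Ioo (0:ℝ) 1 →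
      Continuous (fun θ : ℝ => ∑ j, conj (d j) * (1 - circleMap 0 r θ * conj (x j))⁻¹) := by
    intro d r hr
    apply continuous_finset_sum
    intro j _
    apply Continuous.mul continuous_const
    apply Continuous.inv₀
    · exact continuous_const.sub ((continuous_circleMap 0 r).mul continuous_const)
    · intro θ
      exact hXne _ (hcmnorm hr θ) j
  have hgcont : ∀ {r : ℝ}, r ∈ Set.Ioo (0:ℝ) 1 →
      Continuous (fun θ : ℝ => g (circleMap 0 r θ)) := by
    intro r hr
    exact hg.continuousOn.comp_continuous (continuous_circleMap 0 r) (hcball hr)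
  -- terms continuity
  have hterm_cont : ∀ (j k : Fin n) {r : ℝ}, r ∈ Set.Ioo (0:ℝ) 1 → ∀ (a : ℂ),
      Continuous (fun θ : ℝ => a *
        ((1 - circleMap 0 r θ * conj (x j))⁻¹ * (1 - x k * conj (circleMap 0 r θ))⁻¹)) := by
    intro j k r hr a
    apply Continuous.mul continuous_const
    apply Continuous.mul
    · apply Continuous.inv₀
      · exact continuous_const.sub ((continuous_circleMap 0 r).mul continuous_const)
      · intro θ; exact hXne _ (hcmnorm hr θ) j
    · apply Continuous.inv₀
      · exact continuous_const.sub (continuous_const.mul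
          (Complex.continuous_conj.comp (continuous_circleMap 0 r)))
      · intro θ
        exact hXne' _ (hcmnorm hr θ).le k
  -- key integral identity
  have key_int : ∀ (d : Fin n → ℂ) {r : ℝ}, r ∈ Set.Ioo (0:ℝ) 1 →
      (∫ θ in (0:ℝ)..(2*π),
        ((∑ j, conj (d j) * (1 - circleMap 0 r θ * conj (x j))⁻¹) *
          conj (∑ j, conj (d j) * (1 - circleMap 0 r θ * conj (x j))⁻¹)))
      = ((2*π:ℝ):ℂ) * ∑ j, ∑ k, conj (d j) * d k * (1 - (x k * (r:ℂ)^2) * conj (x j))⁻¹ := by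
    intro d r hr
    have hexp : ∀ θ : ℝ,
        ((∑ j, conj (d j) * (1 - circleMap 0 r θ * conj (x j))⁻¹) *
          conj (∑ j, conj (d j) * (1 - circleMap 0 r θ * conj (x j))⁻¹))
        = ∑ j, ∑ k, (conj (d j) * d k) *
            ((1 - circleMap 0 r θ * conj (x j))⁻¹ * (1 - x k * conj (circleMap 0 r θ))⁻¹) := by
      intro θ
      rw [map_sum, Finset.sum_mul_sum]
      apply Finset.sum_congr rfl; intro j _
      apply Finset.sum_congr rfl; intro k _
      rw [map_mul, map_inv₀, map_sub, map_one, map_mul, Complex.conj_conj, Complex.conj_conj]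
      ring
    rw [intervalIntegral.integral_congr (fun θ _ => hexp θ)]
    have h1 : ∫ θ in (0:ℝ)..(2*π), ∑ j, ∑ k, (conj (d j) * d k) *
          ((1 - circleMap 0 r θ * conj (x j))⁻¹ * (1 - x k * conj (circleMap 0 r θ))⁻¹)
        = ∑ j, ∫ θ in (0:ℝ)..(2*π), ∑ k, (conj (d j) * d k) *
          ((1 - circleMap 0 r θ * conj (x j))⁻¹ * (1 - x k * conj (circleMap 0 r θ))⁻¹) :=
      intervalIntegral.integral_finset_sum
        (fun j _ => (continuous_finset_sum _
          (fun k _ => hterm_cont j k hr _)).intervalIntegrable _ _)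
    rw [h1, Finset.mul_sum]
    apply Finset.sum_congr rfl; intro j _
    have h2 : ∫ θ in (0:ℝ)..(2*π), ∑ k, (conj (d j) * d k) *
          ((1 - circleMap 0 r θ * conj (x j))⁻¹ * (1 - x k * conj (circleMap 0 r θ))⁻¹)
        = ∑ k, ∫ θ in (0:ℝ)..(2*π), (conj (d j) * d k) *
          ((1 - circleMap 0 r θ * conj (x j))⁻¹ * (1 - x k * conj (circleMap 0 r θ))⁻¹) :=
      intervalIntegral.integral_finset_sum
        (fun k _ => (hterm_cont j k hr _).intervalIntegrable _ _)
    rw [h2, Finset.mul_sum]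
    apply Finset.sum_congr rfl; intro k _
    have h3 : ∀ θ : ℝ, (conj (d j) * d k) *
          ((1 - circleMap 0 r θ * conj (x j))⁻¹ * (1 - x k * conj (circleMap 0 r θ))⁻¹)
        = (conj (d j) * d k) * ((fun z => (1 - z * conj (x j))⁻¹) (circleMap 0 r θ) *
            (1 - x k * conj (circleMap 0 r θ))⁻¹) := fun θ => rfl
    rw [intervalIntegral.integral_congr (fun θ _ => h3 θ),
      intervalIntegral.integral_const_mul,
      cauchy_formula (fun z => (1 - z * conj (x j))⁻¹) (hdiff_inv j) hr.1 hr.2 (hx k)]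
    ring
    -- main integral identity
  have key_II : ∀ {r : ℝ}, r ∈ Set.Ioo (0:ℝ) 1 →
      (∫ θ in (0:ℝ)..(2*π), (g (circleMap 0 r θ) * φf (circleMap 0 r θ)) *
          conj (ψf (circleMap 0 r θ)))
      = ((2*π:ℝ):ℂ) * ∑ i, c i * (g (x i * (r:ℂ)^2) * φf (x i * (r:ℂ)^2)) := by
    intro r hr
    have hconjψ : ∀ z : ℂ, conj (ψf z) = ∑ i, c i * (1 - x i * conj z)⁻¹ := by
      intro z
      rw [hψf]
      rw [map_sum]
      apply Finset.sum_congr rfl; intro i _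
      rw [map_mul, map_inv₀, map_sub, map_one, map_mul, Complex.conj_conj, Complex.conj_conj]
      ring_nf
    have hexp : ∀ θ : ℝ, (g (circleMap 0 r θ) * φf (circleMap 0 r θ)) *
          conj (ψf (circleMap 0 r θ))
        = ∑ i, c i * ((fun z => g z * φf z) (circleMap 0 r θ) *
            (1 - x i * conj (circleMap 0 r θ))⁻¹) := by
      intro θ
      rw [hconjψ, Finset.mul_sum]
      apply Finset.sum_congr rfl; intro i _
      ring
    rw [intervalIntegral.integral_congr (fun θ _ => hexp θ)]
    have hcontF : Continuous (fun θ : ℝ => g (circleMap 0 r θ) * φf (circleMap 0 r θ)) :=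
      (hgcont hr).mul (hcont_comb e hr)
    have hcontinv : ∀ i : Fin n, Continuous (fun θ : ℝ =>
        (1 - x i * conj (circleMap 0 r θ))⁻¹) := by
      intro i
      apply Continuous.inv₀
      · exact continuous_const.sub (continuous_const.mul
          (Complex.continuous_conj.comp (continuous_circleMap 0 r)))
      · intro θ; exact hXne' _ (hcmnorm hr θ).le i
    have h1 : ∫ θ in (0:ℝ)..(2*π), ∑ i, c i * ((fun z => g z * φf z) (circleMap 0 r θ) *
            (1 - x i * conj (circleMap 0 r θ))⁻¹)
        = ∑ i, ∫ θ in (0:ℝ)..(2*π), c i * ((fun z => g z * φf z) (circleMap 0 r θ) *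
            (1 - x i * conj (circleMap 0 r θ))⁻¹) :=
      intervalIntegral.integral_finset_sum
        (fun i _ => (continuous_const.mul (hcontF.mul (hcontinv i))).intervalIntegrable _ _)
    rw [h1, Finset.mul_sum]
    apply Finset.sum_congr rfl; intro i _
    rw [intervalIntegral.integral_const_mul,
      cauchy_formula (fun z => g z * φf z) (hg.mul hφdiff) hr.1 hr.2 (hx i)]
    ring
  -- norm bound via Cauchy-Schwarz
  have key_bound : ∀ {r : ℝ}, r ∈ Set.Ioo (0:ℝ) 1 →
      ‖∫ θ in (0:ℝ)..(2*π), (g (circleMap 0 r θ) * φf (circleMap 0 r θ)) *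
          conj (ψf (circleMap 0 r θ))‖
      ≤ M * (Real.sqrt (∫ θ in (0:ℝ)..(2*π), normSq (φf (circleMap 0 r θ)))
           * Real.sqrt (∫ θ in (0:ℝ)..(2*π), normSq (ψf (circleMap 0 r θ)))) := by
    intro r hr
    have hφC : Continuous (fun θ : ℝ => φf (circleMap 0 r θ)) := hcont_comb e hr
    have hψC : Continuous (fun θ : ℝ => ψf (circleMap 0 r θ)) := hcont_comb c hr
    have step1 : ‖∫ θ in (0:ℝ)..(2*π), (g (circleMap 0 r θ) * φf (circleMap 0 r θ)) *
          conj (ψf (circleMap 0 r θ))‖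
        ≤ ∫ θ in (0:ℝ)..(2*π), ‖(g (circleMap 0 r θ) * φf (circleMap 0 r θ)) *
          conj (ψf (circleMap 0 r θ))‖ :=
      intervalIntegral.norm_integral_le_integral_norm h2π
    have step2 : ∫ θ in (0:ℝ)..(2*π), ‖(g (circleMap 0 r θ) * φf (circleMap 0 r θ)) *
          conj (ψf (circleMap 0 r θ))‖
        ≤ ∫ θ in (0:ℝ)..(2*π), (M * ‖φf (circleMap 0 r θ)‖) * ‖ψf (circleMap 0 r θ)‖ := by
      apply intervalIntegral.integral_mono_on h2π
      · exact (((hgcont hr).mul hφC).mul (Complex.continuous_conj.comp hψC)).norm.intervalIntegrable _ _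
      · exact ((continuous_const.mul hφC.norm).mul hψC.norm).intervalIntegrable _ _
      · intro θ _
        rw [norm_mul, norm_mul, RCLike.norm_conj]
        have hgθ := hgb _ (hcball hr θ)
        have h1 := norm_nonneg (φf (circleMap 0 r θ))
        have h2 := norm_nonneg (ψf (circleMap 0 r θ))
        exact mul_le_mul_of_nonneg_right (mul_le_mul_of_nonneg_right hgθ h1) h2
    have step3 : ∫ θ in (0:ℝ)..(2*π), (M * ‖φf (circleMap 0 r θ)‖) * ‖ψf (circleMap 0 r θ)‖
        ≤ Real.sqrt (∫ θ in (0:ℝ)..(2*π), (M * ‖φf (circleMap 0 r θ)‖)^2)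
          * Real.sqrt (∫ θ in (0:ℝ)..(2*π), ‖ψf (circleMap 0 r θ)‖^2) :=
      cs_aux (continuous_const.mul hφC.norm) hψC.norm
        (fun θ => mul_nonneg hM (norm_nonneg _)) (fun θ => norm_nonneg _) h2π
    have hsq : ∀ z : ℂ, ‖z‖^2 = normSq z := by
      intro z
      rw [Complex.sq_norm]
    have e1 : ∫ θ in (0:ℝ)..(2*π), (M * ‖φf (circleMap 0 r θ)‖)^2
        = M^2 * ∫ θ in (0:ℝ)..(2*π), normSq (φf (circleMap 0 r θ)) := by
      rw [← intervalIntegral.integral_const_mul]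
      apply intervalIntegral.integral_congr
      intro θ _
      dsimp only
      rw [← hsq]
      ring
    have e2 : ∫ θ in (0:ℝ)..(2*π), ‖ψf (circleMap 0 r θ)‖^2
        = ∫ θ in (0:ℝ)..(2*π), normSq (ψf (circleMap 0 r θ)) :=
      intervalIntegral.integral_congr (fun θ _ => hsq _)
    rw [e1, e2] at step3
    rw [Real.sqrt_mul (sq_nonneg M), Real.sqrt_sq hM] at step3
    calc ‖∫ θ in (0:ℝ)..(2*π), (g (circleMap 0 r θ) * φf (circleMap 0 r θ)) *
          conj (ψf (circleMap 0 r θ))‖ ≤ _ := step1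
    _ ≤ _ := step2
    _ ≤ _ := step3
    _ = M * (Real.sqrt (∫ θ in (0:ℝ)..(2*π), normSq (φf (circleMap 0 r θ)))
           * Real.sqrt (∫ θ in (0:ℝ)..(2*π), normSq (ψf (circleMap 0 r θ)))) := by ring
  -- real integrals as complex sums
  have hofReal : ∀ (d : Fin n → ℂ) {r : ℝ}, r ∈ Set.Ioo (0:ℝ) 1 →
      ((∫ θ in (0:ℝ)..(2*π), normSq (∑ j, conj (d j) * (1 - circleMap 0 r θ * conj (x j))⁻¹) : ℝ) : ℂ)
      = ((2*π:ℝ):ℂ) * ∑ j, ∑ k, conj (d j) * d k * (1 - (x k * (r:ℂ)^2) * conj (x j))⁻¹ := by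
    intro d r hr
    rw [← intervalIntegral.integral_ofReal]
    rw [← key_int d hr]
    apply intervalIntegral.integral_congr
    intro θ _
    dsimp only
    rw [Complex.mul_conj]
  -- the filter
  have hev : ∀ᶠ r in 𝓝[<] (1:ℝ), r ∈ Set.Ioo (0:ℝ) 1 :=
    Ioo_mem_nhdsLT_of_mem ⟨zero_lt_one, le_refl 1⟩
  -- limits of explicit sums
  have hlim_sum : ∀ d : Fin n → ℂ, Tendsto (fun r : ℝ =>
        ((2*π:ℝ):ℂ) * ∑ j, ∑ k, conj (d j) * d k * (1 - (x k * (r:ℂ)^2) * conj (x j))⁻¹)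
      (𝓝[<] (1:ℝ)) (𝓝 (((2*π:ℝ):ℂ) * ∑ i, ∑ j, d i * conj (d j) * (1 - x i * conj (x j))⁻¹)) := by
    intro d
    have hid : ∑ j, ∑ k, conj (d j) * d k * (1 - x k * conj (x j))⁻¹
        = ∑ i, ∑ j, d i * conj (d j) * (1 - x i * conj (x j))⁻¹ := by
      rw [Finset.sum_comm]
      apply Finset.sum_congr rfl; intro i _
      apply Finset.sum_congr rfl; intro j _
      ring
    rw [← hid]
    apply Filter.Tendsto.mono_left _ nhdsWithin_le_nhds
    apply Filter.Tendsto.const_mul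
    apply tendsto_finset_sum; intro j _
    apply tendsto_finset_sum; intro k _
    have hc : ContinuousAt (fun r : ℝ =>
        conj (d j) * d k * (1 - (x k * (r:ℂ)^2) * conj (x j))⁻¹) 1 := by
      apply ContinuousAt.mul continuousAt_const
      apply ContinuousAt.inv₀
      · exact (continuous_const.sub ((continuous_const.mul
          (Complex.continuous_ofReal.pow 2)).mul continuous_const)).continuousAt
      · have := hXne' (x j) (hx j).le k
        simpa using this
    have hval : (1:ℂ) - (x k * ((1:ℝ):ℂ)^2) * conj (x j) = 1 - x k * conj (x j) := by
      norm_num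
    have := hc.tendsto
    simp only [hval] at this
    convert this using 2
  -- limit of the main integral expression
  have hxtb : ∀ i : Fin n, Tendsto (fun r : ℝ => x i * (r:ℂ)^2) (𝓝[<] (1:ℝ))
      (𝓝[ball (0:ℂ) 1] (x i)) := by
    intro i
    have hxt : Tendsto (fun r : ℝ => x i * (r:ℂ)^2) (𝓝[<] (1:ℝ)) (𝓝 (x i)) := by
      apply Filter.Tendsto.mono_left _ nhdsWithin_le_nhds
      have hc : ContinuousAt (fun r : ℝ => x i * (r:ℂ)^2) 1 :=
        (continuous_const.mul (Complex.continuous_ofReal.pow 2)).continuousAt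
      have := hc.tendsto
      have hval : x i * ((1:ℝ):ℂ)^2 = x i := by norm_num
      rwa [hval] at this
    apply tendsto_nhdsWithin_of_tendsto_nhds_of_eventually_within _ hxt
    apply hev.mono
    intro r hr
    simp only [mem_ball, dist_zero_right, norm_mul, norm_pow, Complex.norm_real,
      Real.norm_eq_abs, abs_of_pos hr.1]
    nlinarith [hx i, norm_nonneg (x i), hr.1, hr.2]
  have hgtend : ∀ i : Fin n, Tendsto (fun r : ℝ => g (x i * (r:ℂ)^2)) (𝓝[<] (1:ℝ))
      (𝓝 (g (x i))) := fun i =>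
    ((hg.continuousOn (x i) (hxball i)).tendsto).comp (hxtb i)
  have hφtend : ∀ i : Fin n, Tendsto (fun r : ℝ => φf (x i * (r:ℂ)^2)) (𝓝[<] (1:ℝ))
      (𝓝 (φf (x i))) := fun i =>
    ((hφdiff.continuousOn (x i) (hxball i)).tendsto).comp (hxtb i)
  have TII : Tendsto (fun r : ℝ => ∫ θ in (0:ℝ)..(2*π),
        (g (circleMap 0 r θ) * φf (circleMap 0 r θ)) * conj (ψf (circleMap 0 r θ)))
      (𝓝[<] (1:ℝ)) (𝓝 (((2*π:ℝ):ℂ) * Nφ)) := by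
    have hNφ_id : ∑ i, c i * (g (x i) * φf (x i)) = Nφ := by
      rw [hNφ, hφf]
      apply Finset.sum_congr rfl; intro i _
      rw [Finset.mul_sum, Finset.mul_sum]
      apply Finset.sum_congr rfl; intro j _
      simp only [he]
      ring
    have htend : Tendsto (fun r : ℝ => ((2*π:ℝ):ℂ) *
          ∑ i, c i * (g (x i * (r:ℂ)^2) * φf (x i * (r:ℂ)^2)))
        (𝓝[<] (1:ℝ)) (𝓝 (((2*π:ℝ):ℂ) * Nφ)) := by
      rw [← hNφ_id]
      apply Filter.Tendsto.const_mul
      apply tendsto_finset_sum; intro i _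
      exact Filter.Tendsto.const_mul _ ((hgtend i).mul (hφtend i))
    apply htend.congr'
    apply hev.mono
    intro r hr
    exact (key_II hr).symm
  -- limits of the real integrals
  have TA : Tendsto (fun r : ℝ => (∫ θ in (0:ℝ)..(2*π), normSq (φf (circleMap 0 r θ)) : ℝ))
      (𝓝[<] (1:ℝ)) (𝓝 ((((2*π:ℝ):ℂ) * Nφ).re)) := by
    have T1 : Tendsto (fun r : ℝ =>
        ((∫ θ in (0:ℝ)..(2*π), normSq (φf (circleMap 0 r θ)) : ℝ) : ℂ))
        (𝓝[<] (1:ℝ)) (𝓝 (((2*π:ℝ):ℂ) * Nφ)) := by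
      apply (hlim_sum e).congr'
      apply hev.mono
      intro r hr
      exact (hofReal e hr).symm
    have := (Complex.continuous_re.tendsto _).comp T1
    apply this.congr
    intro r
    simp
  have TB : Tendsto (fun r : ℝ => (∫ θ in (0:ℝ)..(2*π), normSq (ψf (circleMap 0 r θ)) : ℝ))
      (𝓝[<] (1:ℝ)) (𝓝 ((((2*π:ℝ):ℂ) * Nψ).re)) := by
    have T1 : Tendsto (fun r : ℝ =>
        ((∫ θ in (0:ℝ)..(2*π), normSq (ψf (circleMap 0 r θ)) : ℝ) : ℂ))
        (𝓝[<] (1:ℝ)) (𝓝 (((2*π:ℝ):ℂ) * Nψ)) := by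
      apply (hlim_sum c).congr'
      apply hev.mono
      intro r hr
      exact (hofReal c hr).symm
    have := (Complex.continuous_re.tendsto _).comp T1
    apply this.congr
    intro r
    simp
  -- realness and nonnegativity
  have hkherm : ∀ i j : Fin n, (1 - x j * conj (x i))⁻¹ = conj ((1 - x i * conj (x j))⁻¹) := by
    intro i j
    rw [map_inv₀, map_sub, map_one, map_mul, Complex.conj_conj]
    congr 1
    ring
  have hNφ_im : Nφ.im = 0 := by
    rw [hNφ]
    exact herm_im_zero (fun i j => (1 - x i * conj (x j))⁻¹) (fun i j => hkherm i j) e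
  have hNψ_im : Nψ.im = 0 := by
    rw [hNψ]
    exact herm_im_zero (fun i j => (1 - x i * conj (x j))⁻¹) (fun i j => hkherm i j) c
  have hre2π : ∀ z : ℂ, ((((2*π:ℝ):ℂ)) * z).re = (2*π) * z.re := by
    intro z
    simp [Complex.mul_re]
  have hAnn : ∀ r : ℝ, 0 ≤ (∫ θ in (0:ℝ)..(2*π), normSq (φf (circleMap 0 r θ)) : ℝ) :=
    fun r => intervalIntegral.integral_nonneg h2π (fun θ _ => normSq_nonneg _)
  have hBnn : ∀ r : ℝ, 0 ≤ (∫ θ in (0:ℝ)..(2*π), normSq (ψf (circleMap 0 r θ)) : ℝ) :=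
    fun r => intervalIntegral.integral_nonneg h2π (fun θ _ => normSq_nonneg _)
  have hNφre : 0 ≤ Nφ.re := by
    have h0 : (0:ℝ) ≤ (((2*π:ℝ):ℂ) * Nφ).re :=
      ge_of_tendsto TA (Filter.Eventually.of_forall (fun r => hAnn r))
    rw [hre2π] at h0
    nlinarith
  have hNψre : 0 ≤ Nψ.re := by
    have h0 : (0:ℝ) ≤ (((2*π:ℝ):ℂ) * Nψ).re :=
      ge_of_tendsto TB (Filter.Eventually.of_forall (fun r => hBnn r))
    rw [hre2π] at h0
    nlinarith
  rw [hre2π] at TA TB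
  -- the norm of the limit
  have hnorm_lim : ‖((2*π:ℝ):ℂ) * Nφ‖ = 2*π * Nφ.re := by
    have hNφeq : Nφ = ((Nφ.re : ℝ) : ℂ) := by
      apply Complex.ext
      · simp
      · simp [hNφ_im]
    rw [hNφeq, ← Complex.ofReal_mul, Complex.norm_real, Real.norm_eq_abs,
      Complex.ofReal_re]
    exact abs_of_nonneg (by positivity)
  -- pass to the limit in the Cauchy-Schwarz bound
  have main : 2*π * Nφ.re ≤ M * (Real.sqrt (2*π * Nφ.re) * Real.sqrt (2*π * Nψ.re)) := by
    have TL : Tendsto (fun r : ℝ => ‖∫ θ in (0:ℝ)..(2*π),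
          (g (circleMap 0 r θ) * φf (circleMap 0 r θ)) * conj (ψf (circleMap 0 r θ))‖)
        (𝓝[<] (1:ℝ)) (𝓝 (2*π * Nφ.re)) := by
      rw [← hnorm_lim]
      exact TII.norm
    have TR : Tendsto (fun r : ℝ => M *
          (Real.sqrt (∫ θ in (0:ℝ)..(2*π), normSq (φf (circleMap 0 r θ)))
           * Real.sqrt (∫ θ in (0:ℝ)..(2*π), normSq (ψf (circleMap 0 r θ)))))
        (𝓝[<] (1:ℝ)) (𝓝 (M * (Real.sqrt (2*π * Nφ.re) * Real.sqrt (2*π * Nψ.re)))) := by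
      exact Filter.Tendsto.const_mul _ (TA.sqrt.mul TB.sqrt)
    exact le_of_tendsto_of_tendsto TL TR (hev.mono (fun r hr => key_bound hr))
  -- extract the scalar inequality
  have hfin : Nφ.re ≤ M^2 * Nψ.re := by
    have hs1 : Real.sqrt (2*π * Nφ.re) = Real.sqrt (2*π) * Real.sqrt Nφ.re :=
      Real.sqrt_mul h2π _
    have hs2 : Real.sqrt (2*π * Nψ.re) = Real.sqrt (2*π) * Real.sqrt Nψ.re :=
      Real.sqrt_mul h2π _
    have hss : Real.sqrt (2*π) * Real.sqrt (2*π) = 2*π := Real.mul_self_sqrt h2π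
    rw [hs1, hs2] at main
    have h7 : Nφ.re ≤ M * (Real.sqrt Nφ.re * Real.sqrt Nψ.re) := by
      have h2πpos : (0:ℝ) < 2*π := by linarith
      apply le_of_mul_le_mul_left _ h2πpos
      calc 2*π * Nφ.re ≤ M * (Real.sqrt (2*π) * Real.sqrt Nφ.re *
            (Real.sqrt (2*π) * Real.sqrt Nψ.re)) := main
      _ = 2*π * (M * (Real.sqrt Nφ.re * Real.sqrt Nψ.re)) := by
          rw [show M * (Real.sqrt (2*π) * Real.sqrt Nφ.re * (Real.sqrt (2*π) * Real.sqrt Nψ.re))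
            = (Real.sqrt (2*π) * Real.sqrt (2*π)) * (M * (Real.sqrt Nφ.re * Real.sqrt Nψ.re)) by ring, hss]
    nlinarith [Real.sq_sqrt hNφre, Real.sq_sqrt hNψre, Real.sqrt_nonneg Nφ.re,
      Real.sqrt_nonneg Nψ.re, sq_nonneg (Real.sqrt Nφ.re - M * Real.sqrt Nψ.re)]
  exact hfin

end Helpers

open Filter
open scoped Real Topology

/-- Kernel form of the estimate `‖C_b‖ ≤ ‖1/f‖_∞ · ‖f‖_{H(b)}`: if `f` lies in
the unit ball of `H(b)` and `g = 1/f` is analytic and bounded by `M` on the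
disk, then `M²·k(z,w) − k(b(z),b(w))` is positive semidefinite. -/

theorem composition_norm_bound_via_Hb_function
    (b f g : ℂ → ℂ) (M : ℝ)
    (hb_holo : DifferentiableOn ℂ b (ball (0 : ℂ) 1))
    (hb_maps : ∀ z ∈ ball (0 : ℂ) 1, b z ∈ ball (0 : ℂ) 1)
    (hpos : IsPSDKernelOn
      (fun z w => (1 - b z * conj (b w)) / (1 - z * conj w) - f z * conj (f w))
      (ball (0 : ℂ) 1))
    (hg_holo : DifferentiableOn ℂ g (ball (0 : ℂ) 1))
    (hfg : ∀ z ∈ ball (0 : ℂ) 1, f z * g z = 1)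
    (hg_bdd : ∀ z ∈ ball (0 : ℂ) 1, ‖g z‖ ≤ M) :
    IsPSDKernelOn
      (fun z w => ((M ^ 2 : ℝ) : ℂ) * (1 - z * conj w)⁻¹ - (1 - b z * conj (b w))⁻¹)
      (ball (0 : ℂ) 1) := by
  intro n x hx c
  have hx' : ∀ i, ‖x i‖ < 1 := fun i => by
    simpa [Metric.mem_ball, dist_zero_right] using hx i
  have hB' : ∀ i, ‖b (x i)‖ < 1 := fun i => by
    have := hb_maps (x i) (hx i)
    simpa [Metric.mem_ball, dist_zero_right] using this
  have hFG : ∀ i, f (x i) * g (x i) = 1 := fun i => hfg (x i) (hx i)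
  have hA := stepA (fun i => x i) (fun i => b (x i)) (fun i => f (x i))
    (fun i => g (x i)) c hx' hB' hFG (fun d => hpos n x hx d)
  have hBst := stepB g M hg_holo hg_bdd x hx' c
  have hkhermS : ∀ i j : Fin n,
      (1 - x j * conj (x i))⁻¹ = conj ((1 - x i * conj (x j))⁻¹) := by
    intro i j
    rw [map_inv₀, map_sub, map_one, map_mul, Complex.conj_conj]
    congr 1
    ring
  have hkhermB : ∀ i j : Fin n,
      (1 - b (x j) * conj (b (x i)))⁻¹ = conj ((1 - b (x i) * conj (b (x j)))⁻¹) := by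
    intro i j
    rw [map_inv₀, map_sub, map_one, map_mul, Complex.conj_conj]
    congr 1
    ring
  have hNψ_im : (∑ i, ∑ j, c i * conj (c j) * (1 - x i * conj (x j))⁻¹).im = 0 :=
    herm_im_zero (fun i j => (1 - x i * conj (x j))⁻¹) (fun i j => hkhermS i j) c
  have hNb_im : (∑ i, ∑ j, c i * conj (c j) * (1 - b (x i) * conj (b (x j)))⁻¹).im = 0 :=
    herm_im_zero (fun i j => (1 - b (x i) * conj (b (x j)))⁻¹) (fun i j => hkhermB i j) c
  have hsplit : (∑ i, ∑ j, c i * conj (c j) *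
        (((M^2:ℝ):ℂ) * (1 - x i * conj (x j))⁻¹ - (1 - b (x i) * conj (b (x j)))⁻¹))
      = ((M^2:ℝ):ℂ) * (∑ i, ∑ j, c i * conj (c j) * (1 - x i * conj (x j))⁻¹)
        - ∑ i, ∑ j, c i * conj (c j) * (1 - b (x i) * conj (b (x j)))⁻¹ := by
    rw [Finset.mul_sum, ← Finset.sum_sub_distrib]
    apply Finset.sum_congr rfl; intro i _
    rw [Finset.mul_sum, ← Finset.sum_sub_distrib]
    apply Finset.sum_congr rfl; intro j _
    ring
  show (0:ℂ) ≤ ∑ i, ∑ j, c i * conj (c j) *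
    (((M^2:ℝ):ℂ) * (1 - x i * conj (x j))⁻¹ - (1 - b (x i) * conj (b (x j)))⁻¹)
  rw [hsplit, Complex.nonneg_iff]
  constructor
  · have hre : (((M^2:ℝ):ℂ) * (∑ i, ∑ j, c i * conj (c j) * (1 - x i * conj (x j))⁻¹)
        - ∑ i, ∑ j, c i * conj (c j) * (1 - b (x i) * conj (b (x j)))⁻¹).re
        = M^2 * (∑ i, ∑ j, c i * conj (c j) * (1 - x i * conj (x j))⁻¹).re
          - (∑ i, ∑ j, c i * conj (c j) * (1 - b (x i) * conj (b (x j)))⁻¹).re := by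
      rw [Complex.sub_re, Complex.mul_re, Complex.ofReal_re, Complex.ofReal_im]
      ring
    rw [hre]
    have h1 : (∑ i, ∑ j, c i * conj (c j) * (1 - b (x i) * conj (b (x j)))⁻¹).re
        ≤ (∑ i, ∑ j, (c i * g (x i)) * conj (c j * g (x j)) * (1 - x i * conj (x j))⁻¹).re :=
      (Complex.le_def.mp hA).1
    have h2 := le_trans h1 hBst
    linarith
  · rw [Complex.sub_im, Complex.mul_im, Complex.ofReal_re, Complex.ofReal_im,
      hNψ_im, hNb_im]
    ring
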